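/- Let F be a field. (i) For every (x₀,x₁,x₂) ∈ F³, the point y = (x₀² − x₀x₁, x₀x₂, x₁², x₁x₂) satisfies y₁²y₂ − y₁y₂y₃ − y₀y₃² = 0, so the image of Q lies in Y. (ii) Q restricts to a bijection from the set of projective points (x₀:x₁:x₂) with x₁x₂ ≠ 0 onto the set of projective points y ∈ Y with y₂y₃ ≠ 0, with inverse given by y ↦ (y₁y₂ : y₂y₃ : y₃²). In particular Q is birational onto Y. -/
import Mathlib


/-- The parametrization `Q : ℙ² ⇢ ℙ³`, `(x₀:x₁:x₂) ↦ (x₀² − x₀x₁ : x₀x₂ : x₁² : x₁x₂)`,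
on coordinate representatives. -/
def Qmap {F : Type*} [Field F] (x : Fin 3 → F) : Fin 4 → F :=
  ![x 0 ^ 2 - x 0 * x 1, x 0 * x 2, x 1 ^ 2, x 1 * x 2]

/-- The defining equation of the surface `Y ⊂ ℙ³`: `y₁²y₂ − y₁y₂y₃ − y₀y₃² = 0`. -/
def OnY {F : Type*} [Field F] (y : Fin 4 → F) : Prop :=
  y 1 ^ 2 * y 2 - y 1 * y 2 * y 3 - y 0 * y 3 ^ 2 = 0

/-- (i) The image of `Q` lies in `Y`.  (ii) `Q` restricts to a
bijection from the projective points with `x₁x₂ ≠ 0` onto the projective points of `Y`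
with `y₂y₃ ≠ 0`, with inverse `y ↦ (y₁y₂ : y₂y₃ : y₃²)`; in particular `Q` is birational
onto `Y`.  On representatives: for `x` with `x₁x₂ ≠ 0`, `Q x` satisfies `y₂y₃ ≠ 0` and
the inverse applied to `Q x` is a nonzero scalar multiple of `x`; and for `y` on `Y`
with `y₂y₃ ≠ 0`, the tuple `x = (y₁y₂, y₂y₃, y₃²)` satisfies `x₁x₂ ≠ 0` and `Q x` is a
nonzero scalar multiple of `y`. -/
theorem Q_birational_onto_Y (F : Type*) [Field F] :
    (∀ x : Fin 3 → F, OnY (Qmap x)) ∧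
    (∀ x : Fin 3 → F, x 1 * x 2 ≠ 0 →
      Qmap x 2 * Qmap x 3 ≠ 0 ∧
      ∃ c : F, c ≠ 0 ∧
        (![Qmap x 1 * Qmap x 2, Qmap x 2 * Qmap x 3, Qmap x 3 ^ 2] : Fin 3 → F) =
          c • x) ∧
    ∀ y : Fin 4 → F, OnY y → y 2 * y 3 ≠ 0 →
      (![y 1 * y 2, y 2 * y 3, y 3 ^ 2] : Fin 3 → F) 1 *
          (![y 1 * y 2, y 2 * y 3, y 3 ^ 2] : Fin 3 → F) 2 ≠ 0 ∧
      ∃ c : F, c ≠ 0 ∧ Qmap (![y 1 * y 2, y 2 * y 3, y 3 ^ 2] : Fin 3 → F) = c • y := by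
  have h1 : ∀ x : Fin 3 → F, OnY (Qmap x) := by
    intro x; simp only [OnY, Qmap]; simp [Matrix.cons_val_zero, Matrix.cons_val_one]; ring
  refine ⟨h1, ?_, ?_⟩
  · intro x hx
    have h1 : x 1 ≠ 0 := fun h => hx (by simp [h])
    have h2 : x 2 ≠ 0 := fun h => hx (by simp [h])
    constructor
    · simp only [Qmap]; simp
      exact ⟨h1, h2⟩
    · refine ⟨x 1 ^ 2 * x 2, by simp [pow_eq_zero_iff, h1, h2], ?_⟩
      funext i
      fin_cases i <;> simp [Qmap, Pi.smul_apply, smul_eq_mul] <;> ring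
  · intro y hy hyn
    have h2 : y 2 ≠ 0 := fun h => hyn (by simp [h])
    have h3 : y 3 ≠ 0 := fun h => hyn (by simp [h])
    constructor
    · simp only [Matrix.cons_val_one, Matrix.head_cons]
      show y 2 * y 3 * (![y 1 * y 2, y 2 * y 3, y 3 ^ 2] : Fin 3 → F) 2 ≠ 0
      simp only [Matrix.cons_val_two, Matrix.tail_cons, Matrix.head_cons]
      exact mul_ne_zero hyn (pow_ne_zero 2 h3)
    · refine ⟨y 2 * y 3 ^ 2, by simp [h2, pow_eq_zero_iff, h3], ?_⟩
      have key : y 1 ^ 2 * y 2 - y 1 * y 2 * y 3 = y 0 * y 3 ^ 2 := by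
        have h := hy; unfold OnY at h; linear_combination h
      funext i
      fin_cases i <;> simp [Qmap, Pi.smul_apply, smul_eq_mul]
      · linear_combination y 2 * key
      · ring
      · ring
      · ring
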